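/- Let {Γ_t}_{t≥1} be a nonnegative real sequence whose partial sums D_T = ∑_{t=1}^T Γ_t satisfy D_T ≤ A₁ ln T + A₂ for all T ≥ 1, for some positive constants A₁, A₂. Let p ∈ (0,1) and define f(t) = t^{1−p} / ln t. Then for every integer T₀ with T₀ > e^{1/(1−p)} and every integer T > T₀, ∑_{t=T₀}^{T−1} Γ_t f(t) ≤ (A₁ + A₂) (T−1)^{1−p}. -/

import Mathlib

/-- Monotonicity of `x ↦ x^(1-p)/log x` for `x > exp (1/(1-p))`. -/
lemma f_mono_aux (p : ℝ) (hp1 : p < 1) {x y : ℝ}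
    (hx : Real.exp (1 / (1 - p)) < x) (hxy : x ≤ y) :
    x ^ (1 - p) / Real.log x ≤ y ^ (1 - p) / Real.log y := by
  have h1p : 0 < 1 - p := by linarith
  have hxpos : (0:ℝ) < x := lt_trans (Real.exp_pos _) hx
  have hypos : (0:ℝ) < y := lt_of_lt_of_le hxpos hxy
  have ha : 1 / (1 - p) < Real.log x := (Real.lt_log_iff_exp_lt hxpos).2 hx
  set a := Real.log x with ha_def
  set b := Real.log y with hb_def
  have hab : a ≤ b := Real.log_le_log hxpos hxy
  have ha0 : 0 < a := lt_trans (by positivity) ha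
  have hb0 : 0 < b := lt_of_lt_of_le ha0 hab
  have hinv : 1 / a < 1 - p := by
    rw [div_lt_iff₀ ha0]
    have := (div_lt_iff₀ h1p).mp ha
    linarith [mul_comm a (1 - p)]
  have key : b ≤ a * Real.exp ((1 - p) * (b - a)) := by
    have h1 : 1 + (b - a) / a ≤ Real.exp ((b - a) / a) := by linarith [Real.add_one_le_exp ((b - a) / a)]
    have h2 : Real.exp ((b - a) / a) ≤ Real.exp ((1 - p) * (b - a)) := by
      apply Real.exp_le_exp.2
      rcases eq_or_lt_of_le hab with h | h
      · simp [← h]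
      · have hba : 0 < b - a := by linarith
        rw [div_eq_mul_inv, mul_comm]
        apply mul_le_mul_of_nonneg_right _ (le_of_lt hba)
        rw [← one_div]
        exact le_of_lt hinv
    have h3 : 1 + (b - a) / a = b / a := by field_simp; ring
    have h4 : b / a ≤ Real.exp ((1 - p) * (b - a)) := by
      calc b / a = 1 + (b - a) / a := h3.symm
        _ ≤ Real.exp ((b - a) / a) := h1
        _ ≤ _ := h2
    calc b = a * (b / a) := by field_simp
      _ ≤ a * Real.exp ((1 - p) * (b - a)) := by
          exact mul_le_mul_of_nonneg_left h4 (le_of_lt ha0)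
  rw [Real.rpow_def_of_pos hxpos, Real.rpow_def_of_pos hypos, ← ha_def, ← hb_def,
    div_le_div_iff₀ ha0 hb0, mul_comm a (1 - p), mul_comm b (1 - p)]
  calc Real.exp ((1 - p) * a) * b
      ≤ Real.exp ((1 - p) * a) * (a * Real.exp ((1 - p) * (b - a))) := by
        exact mul_le_mul_of_nonneg_left key (le_of_lt (Real.exp_pos _))
    _ = Real.exp ((1 - p) * a + (1 - p) * (b - a)) * a := by
        rw [Real.exp_add]; ring
    _ = Real.exp ((1 - p) * b) * a := by ring_nf

/-- **Summation-by-parts noise bound** (Lemma 7): if the partial sums of the nonnegative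
sequence `Γ` satisfy `∑_{t=1}^T Γ_t ≤ A₁ ln T + A₂`, `p ∈ (0,1)` and
`f(t) = t^{1-p}/ln t`, then for every integer `T₀ > e^{1/(1-p)}` and every `T > T₀`,
`∑_{t=T₀}^{T-1} Γ_t f(t) ≤ (A₁ + A₂) (T-1)^{1-p}`. -/
theorem summation_by_parts_noise_bound
    (Γ : ℕ → ℝ) (hΓ : ∀ t, 0 ≤ Γ t)
    (A₁ A₂ : ℝ) (hA₁ : 0 < A₁) (hA₂ : 0 < A₂)
    (hD : ∀ T : ℕ, 1 ≤ T → ∑ t ∈ Finset.Icc 1 T, Γ t ≤ A₁ * Real.log T + A₂)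
    (p : ℝ) (hp0 : 0 < p) (hp1 : p < 1)
    (T₀ : ℕ) (hT₀ : Real.exp (1 / (1 - p)) < (T₀ : ℝ)) :
    ∀ T : ℕ, T₀ < T →
      ∑ t ∈ Finset.Icc T₀ (T - 1), Γ t * ((t : ℝ) ^ (1 - p) / Real.log t) ≤
        (A₁ + A₂) * ((T : ℝ) - 1) ^ (1 - p) := by
  intro T hT
  have h1p : 0 < 1 - p := by linarith
  have hT₀1 : 1 ≤ T₀ := by
    by_contra h
    push_neg at h
    interval_cases T₀
    · simp at hT₀; exact absurd hT₀ (not_lt.2 (le_of_lt (Real.exp_pos _)))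
  set S := T - 1 with hS_def
  have hS1 : T₀ ≤ S := by omega
  have hS1' : 1 ≤ S := le_trans hT₀1 hS1
  have hcast : (T : ℝ) - 1 = (S : ℝ) := by
    have : (S : ℝ) = (T : ℝ) - 1 := by
      rw [hS_def, Nat.cast_sub (by omega)]; simp
    linarith
  rw [hcast]
  have hSe : Real.exp (1 / (1 - p)) < (S : ℝ) := lt_of_lt_of_le hT₀ (by exact_mod_cast hS1)
  have hSpos : (0:ℝ) < S := lt_trans (Real.exp_pos _) hSe
  have hlogS : 1 ≤ Real.log S := by
    have h1 : (1:ℝ) ≤ 1 / (1 - p) := by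
      rw [le_div_iff₀ h1p]; linarith
    have := (Real.lt_log_iff_exp_lt hSpos).2 hSe
    linarith
  have hlogSpos : 0 < Real.log S := lt_of_lt_of_le one_pos hlogS
  -- step 1: each term ≤ Γ t * f(S)
  have step1 : ∑ t ∈ Finset.Icc T₀ S, Γ t * ((t : ℝ) ^ (1 - p) / Real.log t) ≤
      ∑ t ∈ Finset.Icc T₀ S, Γ t * ((S : ℝ) ^ (1 - p) / Real.log S) := by
    apply Finset.sum_le_sum
    intro t ht
    rw [Finset.mem_Icc] at ht
    apply mul_le_mul_of_nonneg_left _ (hΓ t)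
    apply f_mono_aux p hp1
    · exact lt_of_lt_of_le hT₀ (by exact_mod_cast ht.1)
    · exact_mod_cast ht.2
  have step2 : ∑ t ∈ Finset.Icc T₀ S, Γ t ≤ A₁ * Real.log S + A₂ := by
    calc ∑ t ∈ Finset.Icc T₀ S, Γ t ≤ ∑ t ∈ Finset.Icc 1 S, Γ t := by
          apply Finset.sum_le_sum_of_subset_of_nonneg
          · apply Finset.Icc_subset_Icc_left hT₀1
          · intro i _ _; exact hΓ i
      _ ≤ A₁ * Real.log S + A₂ := hD S hS1'
  have hfS : 0 ≤ (S : ℝ) ^ (1 - p) / Real.log S := by positivity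
  calc ∑ t ∈ Finset.Icc T₀ S, Γ t * ((t : ℝ) ^ (1 - p) / Real.log t)
      ≤ ∑ t ∈ Finset.Icc T₀ S, Γ t * ((S : ℝ) ^ (1 - p) / Real.log S) := step1
    _ = (∑ t ∈ Finset.Icc T₀ S, Γ t) * ((S : ℝ) ^ (1 - p) / Real.log S) := by
        rw [Finset.sum_mul]
    _ ≤ (A₁ * Real.log S + A₂) * ((S : ℝ) ^ (1 - p) / Real.log S) :=
        mul_le_mul_of_nonneg_right step2 hfS
    _ = (A₁ + A₂ / Real.log S) * (S : ℝ) ^ (1 - p) := by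
        field_simp
    _ ≤ (A₁ + A₂) * (S : ℝ) ^ (1 - p) := by
        apply mul_le_mul_of_nonneg_right _ (by positivity)
        have : A₂ / Real.log S ≤ A₂ := by
          rw [div_le_iff₀ hlogSpos]
          nlinarith
        linarith
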